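/- Let m = q^l − r where l ≥ 1, 1 ≤ r ≤ q^l − 3 (so m ≥ 3), and let t_m(x) = m·x^4 + m·x^3 − x^2 + m·x + m. If q^k > m, then s_q(t_m(q^k)) = (q−1)k + s_q(m−1) + 3·s_q(m). -/

import Mathlib

lemma sum_digits_add_pow_mul (q : ℕ) (hq : 2 ≤ q) (k a b : ℕ) (ha : a < q ^ k) :
    (Nat.digits q (a + q ^ k * b)).sum =
      (Nat.digits q a).sum + (Nat.digits q b).sum := by
  have hq1 : 1 < q := hq
  rcases Nat.eq_zero_or_pos b with rfl | hb
  · simp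
  rcases Nat.eq_zero_or_pos a with rfl | ha0
  · rw [zero_add, Nat.digits_base_pow_mul hq1 hb]
    simp
  have hlen : (Nat.digits q a).length ≤ k := by
    rw [Nat.digits_len q a hq1 ha0.ne']
    have := (Nat.log_lt_iff_lt_pow hq1 ha0.ne').mpr ha
    omega
  have hkdec : k = (Nat.digits q a).length + (k - (Nat.digits q a).length) := by omega
  calc (Nat.digits q (a + q ^ k * b)).sum
      = (Nat.digits q a ++ List.replicate (k - (Nat.digits q a).length) 0
          ++ Nat.digits q b).sum := by
        rw [Nat.digits_append_zeroes_append_digits hq1 hb, ← hkdec]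
    _ = (Nat.digits q a).sum + (Nat.digits q b).sum := by
        simp [List.sum_append]

lemma sum_digits_pow_sub_one (q : ℕ) (hq : 2 ≤ q) (k : ℕ) :
    (Nat.digits q (q ^ k - 1)).sum = (q - 1) * k := by
  induction k with
  | zero => simp
  | succ k ih =>
    have h1 : q ^ (k + 1) - 1 = (q - 1) + q ^ 1 * (q ^ k - 1) := by
      have h2 : 1 ≤ q ^ k := Nat.one_le_pow _ _ (by omega)
      have h3 : q ^ (k + 1) = q * q ^ k := by ring
      have h4 : q * (q ^ k - 1) = q * q ^ k - q := by rw [Nat.mul_sub, mul_one]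
      have h5 : q ≤ q * q ^ k := Nat.le_mul_of_pos_right q h2
      rw [h3, pow_one]
      omega
    rw [h1, sum_digits_add_pow_mul q hq 1 _ _ (by simpa using Nat.sub_lt (by omega) one_pos), ih]
    have : (Nat.digits q (q - 1)).sum = q - 1 := by
      rcases Nat.eq_zero_or_pos (q - 1) with h | h
      · omega
      · rw [Nat.digits_def' (by omega : 1 < q) h]
        have : (q - 1) % q = q - 1 := Nat.mod_eq_of_lt (by omega)
        have hd : (q - 1) / q = 0 := Nat.div_eq_of_lt (by omega)
        simp [this, hd]
    rw [this]; ring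

theorem digit_sum_tm (q l r k m : ℕ) (hq : 2 ≤ q) (hl : 1 ≤ l)
    (hr1 : 1 ≤ r) (hr2 : r ≤ q ^ l - 3) (hm : m = q ^ l - r) (hk : m < q ^ k) :
    (Nat.digits q (m * q ^ (4 * k) + m * q ^ (3 * k) + m * q ^ k + m - q ^ (2 * k))).sum =
      (q - 1) * k + (Nat.digits q (m - 1)).sum + 3 * (Nat.digits q m).sum := by
  have hql : 4 ≤ q ^ l := by omega
  have hm3 : 3 ≤ m := by omega
  obtain ⟨Q, hQ⟩ : ∃ Q, q ^ k = Q := ⟨_, rfl⟩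
  have hQ1 : 1 ≤ Q := hQ ▸ Nat.one_le_pow _ _ (by omega)
  have hmQ : m < Q := hQ ▸ hk
  have hNeq : m * q ^ (4 * k) + m * q ^ (3 * k) + m * q ^ k + m - q ^ (2 * k)
      = m + Q * (m + Q * ((Q - 1) + Q * ((m - 1) + Q * m))) := by
    have e4 : q ^ (4 * k) = Q ^ 4 := by rw [← hQ, ← pow_mul, mul_comm]
    have e3 : q ^ (3 * k) = Q ^ 3 := by rw [← hQ, ← pow_mul, mul_comm]
    have e2 : q ^ (2 * k) = Q ^ 2 := by rw [← hQ, ← pow_mul, mul_comm]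
    rw [e4, e3, e2, hQ]
    have h23 : Q ^ 2 ≤ Q ^ 3 := Nat.pow_le_pow_right (by omega) (by omega)
    have hge : Q ^ 2 ≤ m * Q ^ 3 := le_trans h23 (Nat.le_mul_of_pos_left _ (by omega))
    zify [hge, hQ1, show 1 ≤ m by omega,
      show Q ^ 2 ≤ m * Q ^ 4 + m * Q ^ 3 + m * Q + m by
        have : Q ^ 3 ≤ m * Q ^ 3 := Nat.le_mul_of_pos_left _ (by omega)
        omega]
    ring
  rw [hNeq, ← hQ]
  rw [sum_digits_add_pow_mul q hq k _ _ hk,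
      sum_digits_add_pow_mul q hq k _ _ hk,
      sum_digits_add_pow_mul q hq k _ _ (by omega),
      sum_digits_add_pow_mul q hq k _ _ (by omega),
      sum_digits_pow_sub_one q hq k]
  ring
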